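/- Let N ≥ 1, T ≥ 1, ε > 0, η > 0, and for i = 1,…,N let β_i ≥ 0. Let s̃_i(t) (t = 0,…,T) satisfy s̃_i(0) = 0 and s̃_i(t) ≥ 0, and let D(t) satisfy ∑_{i=1}^N s̃_i(t) = D(t) for all t = 1,…,T. Suppose there exist λ̃_t and l̃_{i,t} ≥ 0 with s̃_i(t)·l̃_{i,t} = 0 and (β_i/η)·ln((s̃_i(t)+ε/N)/(s̃_i(t−1)+ε/N)) = λ̃_t − c_i(t) + l̃_{i,t} for all i and t. Then ∑_{t=1}^T ∑_{i=1}^N c_i(t)·s̃_i(t) ≤ ∑_{t=1}^T λ̃_t·D(t). -/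

import Mathlib

/-- Telescoping sum over `Icc 1 T`. -/
lemma tele_sum (g : ℕ → ℝ) (T : ℕ) :
    ∑ t ∈ Finset.Icc 1 T, (g t - g (t - 1)) = g T - g 0 := by
  induction T with
  | zero => simp
  | succ n ih =>
      rw [Finset.sum_Icc_succ_top (Nat.succ_le_succ (Nat.zero_le n)), ih]
      simp only [Nat.add_sub_cancel]
      ring

/-- Nonnegativity of the accumulated regularization term. -/
lemma reg_nonneg (T : ℕ) (a : ℝ) (ha : 0 < a) (f : ℕ → ℝ)
    (hf0 : f 0 = 0) (hf : ∀ t, 0 ≤ f t) :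
    0 ≤ ∑ t ∈ Finset.Icc 1 T, f t * Real.log ((f t + a) / (f (t - 1) + a)) := by
  have hpos : ∀ t, 0 < f t + a := fun t => by linarith [hf t]
  have key : ∀ t ∈ Finset.Icc 1 T,
      (f t - f (t - 1)) - a * (Real.log (f t + a) - Real.log (f (t - 1) + a)) ≤
        f t * Real.log ((f t + a) / (f (t - 1) + a)) := by
    intro t _
    rw [Real.log_div (hpos t).ne' (hpos (t - 1)).ne']
    set L := Real.log (f t + a) - Real.log (f (t - 1) + a) with hL
    have h1 : Real.log ((f (t - 1) + a) / (f t + a)) ≤ (f (t - 1) + a) / (f t + a) - 1 :=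
      Real.log_le_sub_one_of_pos (div_pos (hpos _) (hpos _))
    rw [Real.log_div (hpos _).ne' (hpos _).ne'] at h1
    have hy : (f (t - 1) + a) / (f t + a) * (f t + a) = f (t - 1) + a :=
      div_mul_cancel₀ _ (hpos t).ne'
    have h2 : (f t + a) * (1 - (f (t - 1) + a) / (f t + a)) ≤ (f t + a) * L := by
      apply mul_le_mul_of_nonneg_left _ (hpos t).le
      simp only [hL]; linarith
    nlinarith [hpos t]
  have hsum := Finset.sum_le_sum key
  have htele1 : ∑ t ∈ Finset.Icc 1 T, (f t - f (t - 1)) = f T - f 0 := tele_sum f T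
  have htele2 : ∑ t ∈ Finset.Icc 1 T,
      (Real.log (f t + a) - Real.log (f (t - 1) + a)) =
        Real.log (f T + a) - Real.log (f 0 + a) :=
    tele_sum (fun t => Real.log (f t + a)) T
  have hsplit : ∑ t ∈ Finset.Icc 1 T,
      ((f t - f (t - 1)) - a * (Real.log (f t + a) - Real.log (f (t - 1) + a)))
      = (f T - f 0) - a * (Real.log (f T + a) - Real.log (f 0 + a)) := by
    rw [Finset.sum_sub_distrib, htele1, ← Finset.mul_sum, htele2]
  rw [hsplit] at hsum
  have hfin : a * (Real.log (f T + a) - Real.log (f 0 + a)) ≤ f T := by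
    have h3 : Real.log ((f T + a) / (f 0 + a)) ≤ (f T + a) / (f 0 + a) - 1 :=
      Real.log_le_sub_one_of_pos (div_pos (hpos _) (hpos _))
    rw [Real.log_div (hpos _).ne' (hpos _).ne'] at h3
    rw [hf0] at h3 ⊢
    have : (f T + a) / (0 + a) - 1 = f T / a := by field_simp; ring
    rw [this] at h3
    have := mul_le_mul_of_nonneg_left h3 ha.le
    rw [mul_div_cancel₀ _ ha.ne'] at this
    linarith
  linarith

/-- Bound on the total operating cost `S` of the online regularization
algorithm with switching cost offset, case `1 ≤ K_s ≤ K_c`. -/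
theorem operating_cost_bound_case1
    (N T : ℕ) (hN : 1 ≤ N) (hT : 1 ≤ T)
    (ε : ℝ) (hε : 0 < ε)
    (η : ℝ) (hη : 0 < η)
    (β : Fin N → ℝ) (hβ : ∀ i, 0 ≤ β i)
    (c : Fin N → ℕ → ℝ)
    (st : Fin N → ℕ → ℝ)
    (hst0 : ∀ i, st i 0 = 0)
    (hst_nonneg : ∀ i t, 0 ≤ st i t)
    (D : ℕ → ℝ)
    (hsum : ∀ t ∈ Finset.Icc 1 T, ∑ i, st i t = D t)
    (lam : ℕ → ℝ)
    (l : Fin N → ℕ → ℝ) (hl : ∀ i, ∀ t ∈ Finset.Icc 1 T, 0 ≤ l i t)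
    (hcs : ∀ i, ∀ t ∈ Finset.Icc 1 T, st i t * l i t = 0)
    (hstat : ∀ i, ∀ t ∈ Finset.Icc 1 T,
      (β i / η) * Real.log ((st i t + ε / N) / (st i (t - 1) + ε / N)) =
        lam t - c i t + l i t) :
    ∑ t ∈ Finset.Icc 1 T, ∑ i, c i t * st i t ≤
      ∑ t ∈ Finset.Icc 1 T, lam t * D t := by
  have hNpos : (0 : ℝ) < N := by exact_mod_cast Nat.lt_of_lt_of_le Nat.zero_lt_one hN
  have ha : 0 < ε / (N : ℝ) := div_pos hε hNpos
  have hterm : ∀ t ∈ Finset.Icc 1 T, ∑ i, c i t * st i t =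
      lam t * D t - ∑ i, (β i / η) *
        (st i t * Real.log ((st i t + ε / N) / (st i (t - 1) + ε / N))) := by
    intro t ht
    rw [← hsum t ht, Finset.mul_sum, ← Finset.sum_sub_distrib]
    refine Finset.sum_congr rfl fun i _ => ?_
    have h := hstat i t ht
    have h2 := hcs i t ht
    linear_combination st i t * h + h2
  rw [Finset.sum_congr rfl hterm, Finset.sum_sub_distrib, Finset.sum_comm]
  have hB : 0 ≤ ∑ i, ∑ t ∈ Finset.Icc 1 T, (β i / η) *
      (st i t * Real.log ((st i t + ε / N) / (st i (t - 1) + ε / N))) := by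
    refine Finset.sum_nonneg fun i _ => ?_
    rw [← Finset.mul_sum]
    exact mul_nonneg (div_nonneg (hβ i) hη.le)
      (reg_nonneg T (ε / N) ha (st i) (hst0 i) (fun t => hst_nonneg i t))
  linarith
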